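/- Let A = k-mod for a k-algebra A (finite-dimensional modules) be the top category of a resolvent pair. If π : P → V is an allowable epimorphism from a relatively projective object P, then π is minimal (for all f ∈ End(P), π ∘ f = π implies f is an isomorphism) if and only if π is relatively essential (for every submodule S ⊆ M, if the restriction π|_S is an allowable epimorphism then S = M). -/

import Mathlib

open CategoryTheory CategoryTheory.Limits

universe v u v' u'

/-- A resolvent pair of abelian categories: an adjunction `F ⊣ U` where the right adjoint
`U : A ⥤ B` is additive, exact and faithful. -/
structure ResolventPair (A : Type u) [Category.{v} A] [Abelian A]
    (B : Type u') [Category.{v'} B] [Abelian B] where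
  /-- the left adjoint (e.g. induction) -/
  F : B ⥤ A
  /-- the right adjoint (e.g. restriction), assumed additive, exact and faithful -/
  U : A ⥤ B
  adj : F ⊣ U
  additive : U.Additive
  preservesFiniteLimits : PreservesFiniteLimits U
  preservesFiniteColimits : PreservesFiniteColimits U
  faithful : U.Faithful

namespace ResolventPair

variable {A : Type u} [Category.{v} A] [Abelian A]
  {B : Type u'} [Category.{v'} B] [Abelian B]

/-- A morphism `f` of `A` is allowable if `U f` admits a quasi-inverse `s`,
i.e. `U f ∘ s ∘ U f = U f`. -/
def Allowable (R : ResolventPair A B) {V W : A} (f : V ⟶ W) : Prop :=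
  ∃ s : R.U.obj W ⟶ R.U.obj V, R.U.map f ≫ s ≫ R.U.map f = R.U.map f

/-- An object `P` of `A` is relatively projective if every lifting problem against an
allowable epimorphism can be solved. -/
def RelProjective (R : ResolventPair A B) (P : A) : Prop :=
  ∀ ⦃V W : A⦄ (f : V ⟶ W), Epi f → R.Allowable f →
    ∀ g : P ⟶ W, ∃ h : P ⟶ V, h ≫ f = g

end ResolventPair

open ModuleCat

variable {k : Type u} [Field k] {Aa : Type u} [Ring Aa] [Algebra k Aa]
  {B : Type u'} [Category.{v'} B] [Abelian B]

/-- The inclusion of a submodule, as a morphism in `ModuleCat`. -/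
def inclusionHom (P : ModuleCat.{u} Aa) (S : Submodule Aa P) :
    ModuleCat.of Aa S ⟶ P :=
  ModuleCat.ofHom S.subtype

/-- Let the top category of a resolvent pair be the category of modules over a `k`-algebra,
and let `π : P → V` be an allowable epimorphism from a relatively projective finite-dimensional
module `P`.  Then `π` is minimal (every endomorphism `f` of `P` with `π ∘ f = π` is an
isomorphism) if and only if it is relatively essential (every submodule `S ⊆ P` on which `π`
restricts to an allowable epimorphism equals `P`). -/
theorem minimal_iff_relEssential
    (R : ResolventPair (ModuleCat.{u} Aa) B)
    (P V : ModuleCat.{u} Aa) (hfin : FiniteDimensional k P)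
    (π : P ⟶ V) (hepi : Epi π) (hallow : R.Allowable π)
    (hproj : R.RelProjective P) :
    (∀ f : P ⟶ P, f ≫ π = π → IsIso f) ↔
      (∀ S : Submodule Aa P, Epi (inclusionHom P S ≫ π) →
        R.Allowable (inclusionHom P S ≫ π) → S = ⊤) := by
  haveI := hfin
  constructor
  · -- minimal → relatively essential
    intro hmin S hSepi hSallow
    obtain ⟨h, hh⟩ := hproj _ hSepi hSallow π
    have hiso : IsIso (h ≫ inclusionHom P S) :=
      hmin _ (by rw [Category.assoc]; exact hh)
    have hepi2 : Epi (inclusionHom P S) := by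
      haveI : Epi (h ≫ inclusionHom P S) := IsIso.epi_of_iso _
      exact epi_of_epi h (inclusionHom P S)
    have hsurj := (ModuleCat.epi_iff_surjective (inclusionHom P S)).mp hepi2
    rw [Submodule.eq_top_iff']
    intro x
    obtain ⟨y, hy⟩ := hsurj x
    exact hy ▸ (show (inclusionHom P S) y ∈ S from y.2)
  · -- relatively essential → minimal
    intro hess f hf
    set S : Submodule Aa P := LinearMap.range f.hom with hS
    let e : P ⟶ ModuleCat.of Aa S := ModuleCat.ofHom f.hom.rangeRestrict
    have hfact : e ≫ inclusionHom P S = f := by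
      apply ModuleCat.hom_ext; apply LinearMap.ext; intro x; rfl
    have hepiS : Epi (inclusionHom P S ≫ π) := by
      haveI : Epi (e ≫ inclusionHom P S ≫ π) := by
        rw [← Category.assoc, hfact, hf]; exact hepi
      exact epi_of_epi e (inclusionHom P S ≫ π)
    obtain ⟨s, hs⟩ := hallow
    have hallowS : R.Allowable (inclusionHom P S ≫ π) := by
      refine ⟨s ≫ R.U.map e, ?_⟩
      simp only [R.U.map_comp, Category.assoc]
      slice_lhs 4 5 => rw [← R.U.map_comp, hfact]
      slice_lhs 4 5 => rw [← R.U.map_comp, hf]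
      slice_lhs 2 4 => rw [hs]
    have hStop : S = ⊤ := hess S hepiS hallowS
    have hsurj : Function.Surjective f := by
      rw [← LinearMap.range_eq_top]; exact hStop
    have hinj : Function.Injective f :=
      (LinearMap.injective_iff_surjective
        (K := k) (f := f.hom.restrictScalars k)).mpr hsurj
    exact (ConcreteCategory.isIso_iff_bijective f).mpr ⟨hinj, hsurj⟩
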